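/- arXiv:2203.08050 — 9 statements merged into one kernel-verified Lean document; each statement's English description precedes it below -/
import Mathlib

section
/- Let (Ω, 𝒜, ℙ) be a probability space with random variables Y₀, Y₁ : Ω → ℝ (integrable), D_z, D_{z'} : Ω → {0,1}, and Z : Ω → {z, z'} with ℙ(Z=z) > 0 and ℙ(Z=z') > 0. Assume Z is independent of the quadruple (Y₀, Y₁, D_z, D_{z'}), that D_{z'} ≥ D_z almost surely, and that ℙ(D_{z'} > D_z) > 0. Define D = D_z·1{Z=z} + D_{z'}·1{Z=z'} and Y = Y₁·D + Y₀·(1−D). Then (E[Y | Z=z'] − E[Y | Z=z]) / (E[D | Z=z'] − E[D | Z=z]) = E[Y₁ − Y₀ | D_{z'} > D_z]. -/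
open MeasureTheory ProbabilityTheory

lemma key_lem {Ω : Type*} [MeasurableSpace Ω] (μ : Measure Ω) [IsProbabilityMeasure μ]
    (Z : Ω → Bool) (hZm : Measurable Z) (W : Ω → ℝ) (hWm : AEStronglyMeasurable W μ)
    (hindep : IndepFun Z W μ) (b : Bool) :
    ∫ ω in {ω | Z ω = b}, W ω ∂μ = (μ {ω | Z ω = b}).toReal * ∫ ω, W ω ∂μ := by
  have hs : MeasurableSet {ω | Z ω = b} := hZm (measurableSet_singleton b)
  have hφ : Measurable (fun b' : Bool => if b' = b then (1:ℝ) else 0) :=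
    measurable_of_countable _
  have hind2 : IndepFun (fun ω => if Z ω = b then (1:ℝ) else 0) W μ :=
    hindep.comp hφ measurable_id
  have h1 : ∫ ω in {ω | Z ω = b}, W ω ∂μ
      = ∫ ω, (if Z ω = b then (1:ℝ) else 0) * W ω ∂μ := by
    rw [← integral_indicator hs]
    congr 1
    ext ω
    by_cases h : Z ω = b <;> simp [Set.indicator, h]
  rw [h1, hind2.integral_fun_mul_eq_mul_integral ((hφ.comp hZm).aestronglyMeasurable) hWm]
  congr 1
  have : (fun ω => if Z ω = b then (1:ℝ) else 0)
      = Set.indicator {ω | Z ω = b} (fun _ => (1:ℝ)) := by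
    ext ω; by_cases h : Z ω = b <;> simp [Set.indicator, h]
  rw [this, integral_indicator_const _ hs]
  simp [Measure.real]

/-- Pairwise LATE identification for a binary treatment: the IV (Wald) ratio
equals the local average treatment effect on compliers. Here `Z : Ω → Bool`
encodes the two instrument values (`false` = z, `true` = z'). -/
theorem pairwise_late_identification
    {Ω : Type*} [MeasurableSpace Ω] (μ : Measure Ω) [IsProbabilityMeasure μ]
    (Y0 Y1 Dz Dz' : Ω → ℝ) (Z : Ω → Bool)
    (hY0int : Integrable Y0 μ) (hY1int : Integrable Y1 μ)
    (hY0m : Measurable Y0) (hY1m : Measurable Y1)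
    (hDzm : Measurable Dz) (hDz'm : Measurable Dz') (hZm : Measurable Z)
    (hDz01 : ∀ ω, Dz ω = 0 ∨ Dz ω = 1) (hDz'01 : ∀ ω, Dz' ω = 0 ∨ Dz' ω = 1)
    (hz : 0 < μ {ω | Z ω = false}) (hz' : 0 < μ {ω | Z ω = true})
    (hindep : IndepFun Z (fun ω => (Y0 ω, Y1 ω, Dz ω, Dz' ω)) μ)
    (hmono : ∀ᵐ ω ∂μ, Dz ω ≤ Dz' ω)
    (hcomp : 0 < μ {ω | Dz ω < Dz' ω})
    (D Y : Ω → ℝ)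
    (hD : ∀ ω, D ω = if Z ω = true then Dz' ω else Dz ω)
    (hY : ∀ ω, Y ω = Y1 ω * D ω + Y0 ω * (1 - D ω)) :
    ((∫ ω in {ω | Z ω = true}, Y ω ∂μ) / (μ {ω | Z ω = true}).toReal
        - (∫ ω in {ω | Z ω = false}, Y ω ∂μ) / (μ {ω | Z ω = false}).toReal)
      / ((∫ ω in {ω | Z ω = true}, D ω ∂μ) / (μ {ω | Z ω = true}).toReal
        - (∫ ω in {ω | Z ω = false}, D ω ∂μ) / (μ {ω | Z ω = false}).toReal)
    = (∫ ω in {ω | Dz ω < Dz' ω}, (Y1 ω - Y0 ω) ∂μ)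
        / (μ {ω | Dz ω < Dz' ω}).toReal := by
  -- notation
  set g1 : Ω → ℝ := fun ω => Y1 ω * Dz' ω + Y0 ω * (1 - Dz' ω) with hg1def
  set g0 : Ω → ℝ := fun ω => Y1 ω * Dz ω + Y0 ω * (1 - Dz ω) with hg0def
  have hst : MeasurableSet {ω | Z ω = true} := hZm (measurableSet_singleton true)
  have hsf : MeasurableSet {ω | Z ω = false} := hZm (measurableSet_singleton false)
  have hpt : (μ {ω | Z ω = true}).toReal ≠ 0 :=
    (ENNReal.toReal_pos hz'.ne' (measure_ne_top μ _)).ne'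
  have hpf : (μ {ω | Z ω = false}).toReal ≠ 0 :=
    (ENNReal.toReal_pos hz.ne' (measure_ne_top μ _)).ne'
  -- bounds
  have hDzb : ∀ ω, ‖Dz ω‖ ≤ 1 := by
    intro ω; rcases hDz01 ω with h | h <;> simp [h]
  have hDz'b : ∀ ω, ‖Dz' ω‖ ≤ 1 := by
    intro ω; rcases hDz'01 ω with h | h <;> simp [h]
  -- integrability
  have hDzint : Integrable Dz μ := by
    refine ⟨hDzm.aestronglyMeasurable, ?_⟩
    exact HasFiniteIntegral.of_bounded (C := 1) (Filter.Eventually.of_forall hDzb)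
  have hDz'int : Integrable Dz' μ := by
    refine ⟨hDz'm.aestronglyMeasurable, ?_⟩
    exact HasFiniteIntegral.of_bounded (C := 1) (Filter.Eventually.of_forall hDz'b)
  have haux : ∀ E : Ω → ℝ, Measurable E → (∀ ω, ‖E ω‖ ≤ 1) →
      Integrable (fun ω => Y1 ω * E ω + Y0 ω * (1 - E ω)) μ := by
    intro E hEm hEb
    have h1 : Integrable (fun ω => E ω * Y1 ω) μ :=
      hY1int.bdd_mul (c := 1) hEm.aestronglyMeasurable (Filter.Eventually.of_forall hEb)
    have h2 : Integrable (fun ω => (1 - E ω) * Y0 ω) μ := by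
      refine hY0int.bdd_mul (c := 2) ((measurable_const.sub hEm).aestronglyMeasurable) ?_
      refine Filter.Eventually.of_forall fun ω => ?_
      have := hEb ω
      rw [Real.norm_eq_abs] at *
      rw [abs_le] at this ⊢
      constructor <;> linarith [this.1, this.2]
    exact (h1.add h2).congr (Filter.Eventually.of_forall fun ω => by simp only [Pi.add_apply]; ring)
  have hg1int : Integrable g1 μ := haux Dz' hDz'm hDz'b
  have hg0int : Integrable g0 μ := haux Dz hDzm hDzb
  -- independence transfers
  have hind_g1 : IndepFun Z g1 μ := by
    have hφ : Measurable (fun p : ℝ × ℝ × ℝ × ℝ => p.2.1 * p.2.2.2 + p.1 * (1 - p.2.2.2)) :=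
      by fun_prop
    exact hindep.comp measurable_id hφ
  have hind_g0 : IndepFun Z g0 μ := by
    have hφ : Measurable (fun p : ℝ × ℝ × ℝ × ℝ => p.2.1 * p.2.2.1 + p.1 * (1 - p.2.2.1)) :=
      by fun_prop
    exact hindep.comp measurable_id hφ
  have hind_Dz : IndepFun Z Dz μ := by
    have hφ : Measurable (fun p : ℝ × ℝ × ℝ × ℝ => p.2.2.1) := by fun_prop
    exact hindep.comp measurable_id hφ
  have hind_Dz' : IndepFun Z Dz' μ := by
    have hφ : Measurable (fun p : ℝ × ℝ × ℝ × ℝ => p.2.2.2) := by fun_prop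
    exact hindep.comp measurable_id hφ
  -- set integrals
  have hYt : ∫ ω in {ω | Z ω = true}, Y ω ∂μ
      = (μ {ω | Z ω = true}).toReal * ∫ ω, g1 ω ∂μ := by
    rw [show (∫ ω in {ω | Z ω = true}, Y ω ∂μ) = ∫ ω in {ω | Z ω = true}, g1 ω ∂μ from
      setIntegral_congr_fun hst (fun ω hω => by
        simp only [Set.mem_setOf_eq] at hω
        simp [hY, hD, hω, hg1def])]
    exact key_lem μ Z hZm g1 hg1int.1 hind_g1 true
  have hYf : ∫ ω in {ω | Z ω = false}, Y ω ∂μ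
      = (μ {ω | Z ω = false}).toReal * ∫ ω, g0 ω ∂μ := by
    rw [show (∫ ω in {ω | Z ω = false}, Y ω ∂μ) = ∫ ω in {ω | Z ω = false}, g0 ω ∂μ from
      setIntegral_congr_fun hsf (fun ω hω => by
        simp only [Set.mem_setOf_eq] at hω
        simp [hY, hD, hω, hg0def])]
    exact key_lem μ Z hZm g0 hg0int.1 hind_g0 false
  have hDt : ∫ ω in {ω | Z ω = true}, D ω ∂μ
      = (μ {ω | Z ω = true}).toReal * ∫ ω, Dz' ω ∂μ := by
    rw [show (∫ ω in {ω | Z ω = true}, D ω ∂μ) = ∫ ω in {ω | Z ω = true}, Dz' ω ∂μ from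
      setIntegral_congr_fun hst (fun ω hω => by
        simp only [Set.mem_setOf_eq] at hω
        simp [hD, hω])]
    exact key_lem μ Z hZm Dz' hDz'int.1 hind_Dz' true
  have hDf : ∫ ω in {ω | Z ω = false}, D ω ∂μ
      = (μ {ω | Z ω = false}).toReal * ∫ ω, Dz ω ∂μ := by
    rw [show (∫ ω in {ω | Z ω = false}, D ω ∂μ) = ∫ ω in {ω | Z ω = false}, Dz ω ∂μ from
      setIntegral_congr_fun hsf (fun ω hω => by
        simp only [Set.mem_setOf_eq] at hω
        simp [hD, hω])]
    exact key_lem μ Z hZm Dz hDzint.1 hind_Dz false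
  have hcancel : ∀ (p x : ℝ), p ≠ 0 → p * x / p = x := fun p x hp => by
    field_simp
  rw [hYt, hYf, hDt, hDf, hcancel _ _ hpt, hcancel _ _ hpf, hcancel _ _ hpt, hcancel _ _ hpf]
  -- numerator
  have hlt : MeasurableSet {ω | Dz ω < Dz' ω} := measurableSet_lt hDzm hDz'm
  have hnum : (∫ ω, g1 ω ∂μ) - ∫ ω, g0 ω ∂μ
      = ∫ ω in {ω | Dz ω < Dz' ω}, (Y1 ω - Y0 ω) ∂μ := by
    rw [← integral_sub hg1int hg0int, ← integral_indicator hlt]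
    apply integral_congr_ae
    filter_upwards [hmono] with ω hm
    show g1 ω - g0 ω = _
    simp only [hg1def, hg0def]
    rcases hDz01 ω with h0 | h0 <;> rcases hDz'01 ω with h1 | h1
    · simp [Set.indicator, Set.mem_setOf_eq, h0, h1]
    · simp [Set.indicator, Set.mem_setOf_eq, h0, h1]
    · exfalso; rw [h0, h1] at hm; linarith
    · simp [Set.indicator, Set.mem_setOf_eq, h0, h1]
  have hden : (∫ ω, Dz' ω ∂μ) - ∫ ω, Dz ω ∂μ = (μ {ω | Dz ω < Dz' ω}).toReal := by
    rw [← integral_sub hDz'int hDzint]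
    have : (fun ω => Dz' ω - Dz ω) =ᵐ[μ]
        Set.indicator {ω | Dz ω < Dz' ω} (fun _ => (1:ℝ)) := by
      filter_upwards [hmono] with ω hm
      rcases hDz01 ω with h0 | h0 <;> rcases hDz'01 ω with h1 | h1
      · simp [Set.indicator, Set.mem_setOf_eq, h0, h1]
      · simp [Set.indicator, Set.mem_setOf_eq, h0, h1]
      · exfalso; rw [h0, h1] at hm; linarith
      · simp [Set.indicator, Set.mem_setOf_eq, h0, h1]
    rw [integral_congr_ae this, integral_indicator_const _ hlt]
    simp [Measure.real]
  rw [hnum, hden]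
end

section
/- Let (Ω, 𝒜, ℙ) be a probability space, let d₁ < d₂ < ⋯ < d_J be real numbers, let Y_{d₁}, …, Y_{d_J} : Ω → ℝ be integrable random variables, let D_z, D_{z'} : Ω → {d₁,…,d_J} be random variables with D_{z'} ≥ D_z almost surely, and let Z : Ω → {z, z'} with ℙ(Z=z) > 0, ℙ(Z=z') > 0 be independent of (Y_{d₁},…,Y_{d_J}, D_z, D_{z'}). Define D = D_z·1{Z=z} + D_{z'}·1{Z=z'} and Y = Σ_{j=1}^J Y_{d_j}·1{D = d_j}. Then E[Y | Z=z'] − E[Y | Z=z] = Σ_{j=2}^{J} E[(Y_{d_j} − Y_{d_{j−1}})·1{D_{z'} ≥ d_j > D_z}]. -/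
open MeasureTheory ProbabilityTheory

private lemma tele_sum (g : ℕ → ℝ) (a : ℕ) :
    ∀ b, a ≤ b → ∑ j ∈ Finset.Icc (a + 1) b, (g j - g (j - 1)) = g b - g a := by
  intro b hb
  induction b, hb using Nat.le_induction with
  | base => rw [Finset.Icc_eq_empty (by omega)]; simp
  | succ b hb ih =>
    rw [Finset.sum_Icc_succ_top (by omega : a + 1 ≤ b + 1), ih]
    simp only [Nat.add_sub_cancel]
    ring

/-- Numerator decomposition in the ACR identification theorem for a multivalued
ordered treatment under pairwise instrument validity. Treatment values are
`d 1 < d 2 < ⋯ < d J`; `Z : Ω → Bool` encodes the instrument pair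
(`false` = z, `true` = z'). -/
theorem acr_numerator_decomposition
    {Ω : Type*} [MeasurableSpace Ω] (μ : Measure Ω) [IsProbabilityMeasure μ]
    (J : ℕ) (hJ : 1 ≤ J) (d : ℕ → ℝ)
    (hd : ∀ j k, 1 ≤ j → j < k → k ≤ J → d j < d k)
    (Yp : ℕ → Ω → ℝ) (hYint : ∀ j, Integrable (Yp j) μ)
    (hYm : ∀ j, Measurable (Yp j))
    (Dz Dz' : Ω → ℝ) (hDzm : Measurable Dz) (hDz'm : Measurable Dz')
    (hDzval : ∀ ω, ∃ j, 1 ≤ j ∧ j ≤ J ∧ Dz ω = d j)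
    (hDz'val : ∀ ω, ∃ j, 1 ≤ j ∧ j ≤ J ∧ Dz' ω = d j)
    (hmono : ∀ᵐ ω ∂μ, Dz ω ≤ Dz' ω)
    (Z : Ω → Bool) (hZm : Measurable Z)
    (hz : 0 < μ {ω | Z ω = false}) (hz' : 0 < μ {ω | Z ω = true})
    (hindep : IndepFun Z
      (fun ω => ((fun j : Fin J => Yp ((j : ℕ) + 1) ω), Dz ω, Dz' ω)) μ)
    (D Y : Ω → ℝ)
    (hD : ∀ ω, D ω = if Z ω = true then Dz' ω else Dz ω)
    (hY : ∀ ω, Y ω = ∑ j ∈ Finset.Icc 1 J, Yp j ω * (if D ω = d j then 1 else 0)) :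
    (∫ ω in {ω | Z ω = true}, Y ω ∂μ) / (μ {ω | Z ω = true}).toReal
      - (∫ ω in {ω | Z ω = false}, Y ω ∂μ) / (μ {ω | Z ω = false}).toReal
    = ∑ j ∈ Finset.Icc 2 J,
        ∫ ω in {ω | d j ≤ Dz' ω ∧ Dz ω < d j}, (Yp j ω - Yp (j - 1) ω) ∂μ := by
  classical
  have hAm : MeasurableSet {ω | Z ω = true} := hZm (measurableSet_singleton true)
  have hBm : MeasurableSet {ω | Z ω = false} := hZm (measurableSet_singleton false)
  set f' : Ω → ℝ := fun ω => ∑ j ∈ Finset.Icc 1 J, Yp j ω * (if Dz' ω = d j then 1 else 0)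
    with hf'def
  set f : Ω → ℝ := fun ω => ∑ j ∈ Finset.Icc 1 J, Yp j ω * (if Dz ω = d j then 1 else 0)
    with hfdef
  -- integrability
  have hterm : ∀ (W : Ω → ℝ) (j : ℕ),
      (fun ω => Yp j ω * (if W ω = d j then (1:ℝ) else 0))
        = Set.indicator {ω | W ω = d j} (Yp j) := by
    intro W j; funext ω
    by_cases h : W ω = d j <;> simp [Set.indicator_apply, h]
  have hf'int : Integrable f' μ := by
    apply integrable_finset_sum
    intro j _
    rw [hterm Dz' j]
    exact (hYint j).indicator (hDz'm (measurableSet_singleton (d j)))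
  have hfint : Integrable f μ := by
    apply integrable_finset_sum
    intro j _
    rw [hterm Dz j]
    exact (hYint j).indicator (hDzm (measurableSet_singleton (d j)))
  -- Y equals f' / f on the two events
  have hYA : Set.EqOn Y f' {ω | Z ω = true} := by
    intro ω hω
    simp only [Set.mem_setOf_eq] at hω
    rw [hY ω, hf'def]
    refine Finset.sum_congr rfl fun j _ => ?_
    rw [hD ω, if_pos hω]
  have hYB : Set.EqOn Y f {ω | Z ω = false} := by
    intro ω hω
    simp only [Set.mem_setOf_eq] at hω
    rw [hY ω, hfdef]
    refine Finset.sum_congr rfl fun j _ => ?_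
    rw [hD ω, if_neg (show ¬Z ω = true by simp [hω])]
  -- independence consequences
  have hcompmeas : ∀ c : ℝ → ℝ → ℝ, Measurable (Function.uncurry c) →
      True := fun _ _ => trivial
  have hF'm : Measurable (fun p : (Fin J → ℝ) × ℝ × ℝ =>
      ∑ j : Fin J, p.1 j * (if p.2.2 = d ((j:ℕ)+1) then (1:ℝ) else 0)) := by
    apply Finset.measurable_sum
    intro j _
    exact ((measurable_pi_apply j).comp measurable_fst).mul
      (Measurable.ite ((measurable_snd.comp measurable_snd) (measurableSet_singleton _))
        measurable_const measurable_const)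
  have hFm : Measurable (fun p : (Fin J → ℝ) × ℝ × ℝ =>
      ∑ j : Fin J, p.1 j * (if p.2.1 = d ((j:ℕ)+1) then (1:ℝ) else 0)) := by
    apply Finset.measurable_sum
    intro j _
    exact ((measurable_pi_apply j).comp measurable_fst).mul
      (Measurable.ite ((measurable_fst.comp measurable_snd) (measurableSet_singleton _))
        measurable_const measurable_const)
  have hsum_eq : ∀ (W : Ω → ℝ) (ω : Ω),
      ∑ j ∈ Finset.Icc 1 J, Yp j ω * (if W ω = d j then (1:ℝ) else 0)
        = ∑ j : Fin J, Yp ((j:ℕ)+1) ω * (if W ω = d ((j:ℕ)+1) then (1:ℝ) else 0) := by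
    intro W ω
    rw [show Finset.Icc 1 J = Finset.Ico 1 (J + 1) by rw [Finset.Ico_add_one_right_eq_Icc],
      Finset.sum_Ico_eq_sum_range,
      Fin.sum_univ_eq_sum_range (fun n => Yp (n + 1) ω * if W ω = d (n + 1) then (1:ℝ) else 0) J]
    simp only [Nat.add_sub_cancel]
    exact Finset.sum_congr rfl fun k _ => by rw [Nat.add_comm]
  have hcomp' : f' = (fun p : (Fin J → ℝ) × ℝ × ℝ =>
      ∑ j : Fin J, p.1 j * (if p.2.2 = d ((j:ℕ)+1) then (1:ℝ) else 0))
      ∘ (fun ω => ((fun j : Fin J => Yp ((j : ℕ) + 1) ω), Dz ω, Dz' ω)) := by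
    funext ω
    simp only [Function.comp_apply, hf'def]
    exact hsum_eq Dz' ω
  have hcomp : f = (fun p : (Fin J → ℝ) × ℝ × ℝ =>
      ∑ j : Fin J, p.1 j * (if p.2.1 = d ((j:ℕ)+1) then (1:ℝ) else 0))
      ∘ (fun ω => ((fun j : Fin J => Yp ((j : ℕ) + 1) ω), Dz ω, Dz' ω)) := by
    funext ω
    simp only [Function.comp_apply, hfdef]
    exact hsum_eq Dz ω
  have hφt : Measurable (fun b : Bool => if b = true then (1:ℝ) else 0) := by
    exact measurable_of_countable _
  have hφf : Measurable (fun b : Bool => if b = false then (1:ℝ) else 0) := by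
    exact measurable_of_countable _
  have hindf' : IndepFun (fun ω => if Z ω = true then (1:ℝ) else 0) f' μ := by
    rw [hcomp']
    exact hindep.comp hφt hF'm
  have hindf : IndepFun (fun ω => if Z ω = false then (1:ℝ) else 0) f μ := by
    rw [hcomp]
    exact hindep.comp hφf hFm
  -- set integrals via independence
  have hkey : ∀ (g : Ω → ℝ), Integrable g μ → ∀ (b : Bool), MeasurableSet {ω | Z ω = b} →
      IndepFun (fun ω => if Z ω = b then (1:ℝ) else 0) g μ →
      ∫ ω in {ω | Z ω = b}, g ω ∂μ = (μ {ω | Z ω = b}).toReal * ∫ ω, g ω ∂μ := by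
    intro g hgint b hSm hind
    have h3 : ∫ ω, (if Z ω = b then (1:ℝ) else 0) * g ω ∂μ
        = ∫ ω in {ω | Z ω = b}, g ω ∂μ := by
      rw [← integral_indicator hSm]
      congr 1; funext ω
      by_cases h : Z ω = b <;> simp [Set.indicator_apply, h]
    have h1 : ∫ ω, (if Z ω = b then (1:ℝ) else 0) * g ω ∂μ
        = (∫ ω, (if Z ω = b then (1:ℝ) else 0) ∂μ) * ∫ ω, g ω ∂μ :=
      hind.integral_mul_eq_mul_integral
        ((Measurable.ite hSm measurable_const measurable_const).aestronglyMeasurable)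
        hgint.1
    have h2 : ∫ ω, (if Z ω = b then (1:ℝ) else 0) ∂μ = (μ {ω | Z ω = b}).toReal := by
      have he : (fun ω => if Z ω = b then (1:ℝ) else 0)
          = Set.indicator {ω | Z ω = b} (fun _ => (1:ℝ)) := by
        funext ω; by_cases h : Z ω = b <;> simp [Set.indicator_apply, h]
      rw [he, integral_indicator_const (1:ℝ) hSm, smul_eq_mul, mul_one]; rfl
    rw [← h3, h1, h2]
  have hintA := hkey f' hf'int true hAm hindf'
  have hintB := hkey f hfint false hBm hindf
  have hAne : (μ {ω | Z ω = true}).toReal ≠ 0 :=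
    ENNReal.toReal_ne_zero.mpr ⟨hz'.ne', measure_ne_top μ _⟩
  have hBne : (μ {ω | Z ω = false}).toReal ≠ 0 :=
    ENNReal.toReal_ne_zero.mpr ⟨hz.ne', measure_ne_top μ _⟩
  -- pointwise decomposition
  set g2 : Ω → ℝ := fun ω => ∑ j ∈ Finset.Icc 2 J,
      (Yp j ω - Yp (j-1) ω) * (if d j ≤ Dz' ω ∧ Dz ω < d j then (1:ℝ) else 0) with hg2def
  have hle_iff : ∀ j k, 1 ≤ j → j ≤ J → 1 ≤ k → k ≤ J → (d j ≤ d k ↔ j ≤ k) := by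
    intro j k hj1 hjJ hk1 hkJ
    constructor
    · intro h
      by_contra hc
      push_neg at hc
      exact absurd h (not_le.mpr (hd k j hk1 hc hjJ))
    · intro h
      rcases h.lt_or_eq with h | h
      · exact (hd j k hj1 h hkJ).le
      · rw [h]
  have hae : (fun ω => f' ω - f ω) =ᵐ[μ] g2 := by
    filter_upwards [hmono] with ω hm
    obtain ⟨σ, hσ1, hσJ, hσ⟩ := hDzval ω
    obtain ⟨τ, hτ1, hτJ, hτ⟩ := hDz'val ω
    have hστ : σ ≤ τ := by
      rw [hσ, hτ] at hm
      exact (hle_iff σ τ hσ1 hσJ hτ1 hτJ).mp hm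
    have hone : ∀ (W : Ω → ℝ) (k : ℕ), 1 ≤ k → k ≤ J → W ω = d k →
        ∑ j ∈ Finset.Icc 1 J, Yp j ω * (if W ω = d j then (1:ℝ) else 0) = Yp k ω := by
      intro W k hk1 hkJ hWk
      rw [Finset.sum_eq_single k]
      · rw [hWk, if_pos rfl, mul_one]
      · intro j hj hjk
        have hj' := Finset.mem_Icc.mp hj
        have hne : d k ≠ d j := by
          rcases Nat.lt_or_ge j k with h | h
          · exact (hd j k hj'.1 h hkJ).ne'
          · exact (hd k j hk1 (lt_of_le_of_ne h (Ne.symm hjk)) hj'.2).ne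
        rw [hWk, if_neg hne, mul_zero]
      · intro h
        exact absurd (Finset.mem_Icc.mpr ⟨hk1, hkJ⟩) h
    have hf'ω : f' ω = Yp τ ω := by
      rw [hf'def]; exact hone Dz' τ hτ1 hτJ hτ
    have hfω : f ω = Yp σ ω := by
      rw [hfdef]; exact hone Dz σ hσ1 hσJ hσ
    have hg2ω : g2 ω = Yp τ ω - Yp σ ω := by
      show (∑ j ∈ Finset.Icc 2 J,
        (Yp j ω - Yp (j-1) ω) * (if d j ≤ Dz' ω ∧ Dz ω < d j then (1:ℝ) else 0)) = _
      have hcond : ∀ j ∈ Finset.Icc 2 J,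
          (Yp j ω - Yp (j-1) ω) * (if d j ≤ Dz' ω ∧ Dz ω < d j then (1:ℝ) else 0)
            = if σ + 1 ≤ j ∧ j ≤ τ then (Yp j ω - Yp (j-1) ω) else 0 := by
        intro j hj
        have hj' := Finset.mem_Icc.mp hj
        have h1 : d j ≤ Dz' ω ↔ j ≤ τ := by
          rw [hτ]; exact hle_iff j τ (by omega) hj'.2 hτ1 hτJ
        have h2 : Dz ω < d j ↔ σ < j := by
          rw [hσ]
          constructor
          · intro h
            by_contra hc
            push_neg at hc
            exact absurd ((hle_iff j σ (by omega) hj'.2 hσ1 hσJ).mpr hc) (not_le.mpr h)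
          · intro h
            exact hd σ j hσ1 h hj'.2
        have h3 : (d j ≤ Dz' ω ∧ Dz ω < d j) ↔ (σ + 1 ≤ j ∧ j ≤ τ) := by
          rw [h1, h2]
          constructor <;> intro h <;> omega
        by_cases h : σ + 1 ≤ j ∧ j ≤ τ
        · rw [if_pos (h3.mpr h), if_pos h, mul_one]
        · rw [if_neg (fun hc => h (h3.mp hc)), if_neg h, mul_zero]
      rw [Finset.sum_congr rfl hcond, ← Finset.sum_filter]
      have hfilt : Finset.filter (fun j => σ + 1 ≤ j ∧ j ≤ τ) (Finset.Icc 2 J)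
          = Finset.Icc (σ + 1) τ := by
        ext j
        simp only [Finset.mem_filter, Finset.mem_Icc]
        omega
      rw [hfilt, tele_sum (fun j => Yp j ω) σ τ hστ]
    rw [hf'ω, hfω, hg2ω]
  have hg2int_term : ∀ j, (fun ω => (Yp j ω - Yp (j-1) ω)
      * (if d j ≤ Dz' ω ∧ Dz ω < d j then (1:ℝ) else 0))
      = Set.indicator {ω | d j ≤ Dz' ω ∧ Dz ω < d j} (fun ω => Yp j ω - Yp (j-1) ω) := by
    intro j; funext ω
    by_cases h : d j ≤ Dz' ω ∧ Dz ω < d j <;> simp [Set.indicator_apply, h]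
  have hsetm : ∀ j, MeasurableSet {ω | d j ≤ Dz' ω ∧ Dz ω < d j} := by
    intro j
    exact (measurableSet_le measurable_const hDz'm).inter
      (measurableSet_lt hDzm measurable_const)
  have hIg2 : ∫ ω, g2 ω ∂μ = ∑ j ∈ Finset.Icc 2 J,
      ∫ ω in {ω | d j ≤ Dz' ω ∧ Dz ω < d j}, (Yp j ω - Yp (j-1) ω) ∂μ := by
    rw [hg2def, integral_finset_sum]
    · refine Finset.sum_congr rfl fun j _ => ?_
      rw [hg2int_term j, integral_indicator (hsetm j)]
    · intro j _
      rw [hg2int_term j]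
      exact ((hYint j).sub (hYint (j-1))).indicator (hsetm j)
  rw [setIntegral_congr_fun hAm hYA, setIntegral_congr_fun hBm hYB, hintA, hintB,
    mul_div_cancel_left₀ _ hAne, mul_div_cancel_left₀ _ hBne,
    ← integral_sub hf'int hfint, integral_congr_ae hae, hIg2]
end

section
/- Let (Ω, 𝒜, ℙ) be a probability space, let d₁ < d₂ < ⋯ < d_J be real numbers, and let D_z, D_{z'} : Ω → {d₁,…,d_J} satisfy D_{z'} ≥ D_z almost surely. Let Z : Ω → {z, z'} with ℙ(Z=z) > 0, ℙ(Z=z') > 0 be independent of (D_z, D_{z'}), and define D = D_z·1{Z=z} + D_{z'}·1{Z=z'}. Then E[D | Z=z'] − E[D | Z=z] = Σ_{j=2}^{J} (d_j − d_{j−1})·ℙ(D_{z'} ≥ d_j > D_z). -/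
open MeasureTheory ProbabilityTheory

private lemma acr_tele_sum (d : ℕ → ℝ) :
    ∀ b a, a ≤ b → ∑ j ∈ Finset.Icc (a+1) b, (d j - d (j-1)) = d b - d a := by
  intro b
  induction b with
  | zero =>
    intro a ha
    have : a = 0 := Nat.le_zero.mp ha
    subst this; simp
  | succ b ih =>
    intro a ha
    by_cases h : a = b + 1
    · subst h
      rw [Finset.Icc_eq_empty (by omega)]
      simp
    · have hab : a ≤ b := by omega
      rw [Finset.sum_Icc_succ_top (by omega : a + 1 ≤ b + 1), ih a hab]
      simp only [Nat.add_sub_cancel]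
      ring

/-- Denominator (first-stage) identity for a multivalued ordered treatment:
the difference in conditional means of the treatment across the two instrument
values equals the telescoping sum of jump probabilities weighted by treatment
increments. `Z : Ω → Bool` encodes the instrument pair (`false` = z, `true` = z'). -/
theorem acr_denominator_identity
    {Ω : Type*} [MeasurableSpace Ω] (μ : Measure Ω) [IsProbabilityMeasure μ]
    (J : ℕ) (hJ : 1 ≤ J) (d : ℕ → ℝ)
    (hd : ∀ j k, 1 ≤ j → j < k → k ≤ J → d j < d k)
    (Dz Dz' : Ω → ℝ) (hDzm : Measurable Dz) (hDz'm : Measurable Dz')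
    (hDzval : ∀ ω, ∃ j, 1 ≤ j ∧ j ≤ J ∧ Dz ω = d j)
    (hDz'val : ∀ ω, ∃ j, 1 ≤ j ∧ j ≤ J ∧ Dz' ω = d j)
    (hmono : ∀ᵐ ω ∂μ, Dz ω ≤ Dz' ω)
    (Z : Ω → Bool) (hZm : Measurable Z)
    (hz : 0 < μ {ω | Z ω = false}) (hz' : 0 < μ {ω | Z ω = true})
    (hindep : IndepFun Z (fun ω => (Dz ω, Dz' ω)) μ)
    (D : Ω → ℝ)
    (hD : ∀ ω, D ω = if Z ω = true then Dz' ω else Dz ω) :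
    (∫ ω in {ω | Z ω = true}, D ω ∂μ) / (μ {ω | Z ω = true}).toReal
      - (∫ ω in {ω | Z ω = false}, D ω ∂μ) / (μ {ω | Z ω = false}).toReal
    = ∑ j ∈ Finset.Icc 2 J,
        (d j - d (j - 1)) * (μ {ω | d j ≤ Dz' ω ∧ Dz ω < d j}).toReal := by
  set T : Set Ω := {ω | Z ω = true} with hT
  set F : Set Ω := {ω | Z ω = false} with hF
  have hTm : MeasurableSet T := hZm (measurableSet_singleton true)
  have hFm : MeasurableSet F := hZm (measurableSet_singleton false)
  -- integrability of Dz and Dz'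
  set C : ℝ := ∑ j ∈ Finset.Icc 1 J, |d j| with hC
  have hbound : ∀ (f : Ω → ℝ), (∀ ω, ∃ j, 1 ≤ j ∧ j ≤ J ∧ f ω = d j) →
      ∀ ω, ‖f ω‖ ≤ C := by
    intro f hf ω
    obtain ⟨j, hj1, hjJ, hval⟩ := hf ω
    rw [Real.norm_eq_abs, hval]
    exact Finset.single_le_sum (f := fun j => |d j|) (fun _ _ => abs_nonneg _)
      (Finset.mem_Icc.mpr ⟨hj1, hjJ⟩)
  have hDzint : Integrable Dz μ :=
    Integrable.mono' (integrable_const C) hDzm.aestronglyMeasurable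
      (Filter.Eventually.of_forall (hbound Dz hDzval))
  have hDz'int : Integrable Dz' μ :=
    Integrable.mono' (integrable_const C) hDz'm.aestronglyMeasurable
      (Filter.Eventually.of_forall (hbound Dz' hDz'val))
  -- indicator functions of the instrument events
  set X : Ω → ℝ := fun ω => if Z ω = true then 1 else 0 with hX
  set Y : Ω → ℝ := fun ω => if Z ω = false then 1 else 0 with hY
  have hφm : Measurable (fun b : Bool => if b = true then (1:ℝ) else 0) :=
    measurable_from_top
  have hψm : Measurable (fun b : Bool => if b = false then (1:ℝ) else 0) :=
    measurable_from_top
  have hXm : Measurable X := hφm.comp hZm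
  have hYm : Measurable Y := hψm.comp hZm
  have hXindep : IndepFun X Dz' μ := hindep.comp hφm measurable_snd
  have hYindep : IndepFun Y Dz μ := hindep.comp hψm measurable_fst
  -- the set integrals
  have h1 : ∫ ω in T, D ω ∂μ = (μ T).toReal * ∫ ω, Dz' ω ∂μ := by
    rw [setIntegral_congr_fun hTm (g := Dz') (fun ω hω => by
      rw [hD]; exact if_pos hω)]
    rw [← integral_indicator hTm]
    have heq : T.indicator Dz' = X * Dz' := by
      ext ω
      by_cases h : Z ω = true <;>
        simp [Set.indicator, hT, hX, h, Set.mem_setOf_eq]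
    rw [heq, hXindep.integral_mul_eq_mul_integral hXm.aestronglyMeasurable hDz'm.aestronglyMeasurable]
    congr 1
    have heq2 : X = T.indicator (fun _ => (1:ℝ)) := by
      ext ω
      by_cases h : Z ω = true <;>
        simp [Set.indicator, hT, hX, h, Set.mem_setOf_eq]
    rw [heq2, integral_indicator_const _ hTm, measureReal_def, smul_eq_mul, mul_one]
  have h2 : ∫ ω in F, D ω ∂μ = (μ F).toReal * ∫ ω, Dz ω ∂μ := by
    rw [setIntegral_congr_fun hFm (g := Dz) (fun ω hω => by
      rw [hD]
      have : Z ω = false := hω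
      simp [this])]
    rw [← integral_indicator hFm]
    have heq : F.indicator Dz = Y * Dz := by
      ext ω
      by_cases h : Z ω = false <;>
        simp [Set.indicator, hF, hY, h, Set.mem_setOf_eq]
    rw [heq, hYindep.integral_mul_eq_mul_integral hYm.aestronglyMeasurable hDzm.aestronglyMeasurable]
    congr 1
    have heq2 : Y = F.indicator (fun _ => (1:ℝ)) := by
      ext ω
      by_cases h : Z ω = false <;>
        simp [Set.indicator, hF, hY, h, Set.mem_setOf_eq]
    rw [heq2, integral_indicator_const _ hFm, measureReal_def, smul_eq_mul, mul_one]
  have hTne : (μ T).toReal ≠ 0 :=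
    (ENNReal.toReal_pos hz'.ne' (measure_ne_top μ T)).ne'
  have hFne : (μ F).toReal ≠ 0 :=
    (ENNReal.toReal_pos hz.ne' (measure_ne_top μ F)).ne'
  rw [h1, h2, mul_div_cancel_left₀ _ hTne, mul_div_cancel_left₀ _ hFne]
  -- now: ∫ Dz' - ∫ Dz = ∑ ...
  set S : ℕ → Set Ω := fun j => {ω | d j ≤ Dz' ω ∧ Dz ω < d j} with hS
  have hSm : ∀ j, MeasurableSet (S j) := fun j =>
    (measurableSet_le measurable_const hDz'm).inter
      (measurableSet_lt hDzm measurable_const)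
  set g : Ω → ℝ :=
    fun ω => ∑ j ∈ Finset.Icc 2 J, (S j).indicator (fun _ => d j - d (j-1)) ω
    with hg
  have hae : (fun ω => Dz' ω - Dz ω) =ᵐ[μ] g := by
    filter_upwards [hmono] with ω hle
    obtain ⟨a, ha1, haJ, haval⟩ := hDzval ω
    obtain ⟨b, hb1, hbJ, hbval⟩ := hDz'val ω
    have hdab : d a ≤ d b := by rw [← haval, ← hbval]; exact hle
    have hab : a ≤ b := by
      by_contra h
      push_neg at h
      exact absurd hdab (not_le.mpr (hd b a hb1 h haJ))
    have step : ∀ j ∈ Finset.Icc 2 J,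
        (S j).indicator (fun _ => d j - d (j-1)) ω
        = if a < j ∧ j ≤ b then d j - d (j-1) else 0 := by
      intro j hj
      obtain ⟨hj2, hjJ⟩ := Finset.mem_Icc.mp hj
      have hmem : ω ∈ S j ↔ (a < j ∧ j ≤ b) := by
        rw [hS]
        simp only [Set.mem_setOf_eq, haval, hbval]
        constructor
        · rintro ⟨hub, hlb⟩
          constructor
          · by_contra hc
            push_neg at hc
            rcases Nat.lt_or_ge j a with h' | h'
            · exact absurd hlb (not_lt.mpr (le_of_lt (hd j a (by omega) h' haJ)))
            · have : j = a := le_antisymm hc h'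
              subst this; exact absurd hlb (lt_irrefl _)
          · by_contra hc
            push_neg at hc
            exact absurd hub (not_le.mpr (hd b j hb1 hc hjJ))
        · rintro ⟨haj, hjb⟩
          constructor
          · rcases Nat.lt_or_ge j b with h' | h'
            · exact le_of_lt (hd j b (by omega) h' hbJ)
            · have : j = b := le_antisymm hjb h'
              subst this; exact le_refl _
          · exact hd a j ha1 haj hjJ
      by_cases h : ω ∈ S j
      · rw [Set.indicator_of_mem h, if_pos (hmem.mp h)]
      · rw [Set.indicator_of_notMem h, if_neg (fun hc => h (hmem.mpr hc))]
    rw [hg]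
    simp only []
    rw [Finset.sum_congr rfl step, ← Finset.sum_filter]
    have hfilter : (Finset.Icc 2 J).filter (fun j => a < j ∧ j ≤ b)
        = Finset.Icc (a+1) b := by
      ext j
      simp only [Finset.mem_filter, Finset.mem_Icc]
      omega
    rw [hfilter, acr_tele_sum d b a hab, haval, hbval]
  have hint : ∫ ω, (Dz' ω - Dz ω) ∂μ
      = ∑ j ∈ Finset.Icc 2 J, (d j - d (j-1)) * (μ (S j)).toReal := by
    rw [integral_congr_ae hae, hg]
    rw [integral_finset_sum _ (fun j _ => (integrable_const _).indicator (hSm j))]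
    refine Finset.sum_congr rfl fun j _ => ?_
    rw [integral_indicator_const _ (hSm j), measureReal_def, smul_eq_mul, mul_comm]
  rw [← hint, integral_sub hDz'int hDzint]
end

section
/- Let 𝒮 be a finite set, and let Z_M, Z_0, Z_P ⊆ 𝒮 with Z_M ⊆ Z_0. Let c : 𝒮 → ℝ be any function, and for each subset A ⊆ 𝒮 define the vector β(A) ∈ ℝ^𝒮 by β(A)_s = 1{s ∈ A}·c(s). Then ‖β(Z_0 ∩ Z_P) − β(Z_M)‖₂ ≤ ‖β(Z_P) − β(Z_M)‖₂, where ‖·‖₂ is the Euclidean norm on ℝ^𝒮. -/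
/-- Combinatorial core of the bias-reduction theorem: intersecting the presumed
validity set `ZP` with the pseudo-validity set `Z0 ⊇ ZM` never increases the
Euclidean distance of the indicator-weighted vector to the truth `β(ZM)`. -/
theorem bias_reduction_core
    {𝒮 : Type*} [Fintype 𝒮] [DecidableEq 𝒮]
    (ZM Z0 ZP : Finset 𝒮) (hsub : ZM ⊆ Z0) (c : 𝒮 → ℝ) :
    Real.sqrt (∑ s : 𝒮,
        ((if s ∈ Z0 ∩ ZP then c s else 0) - (if s ∈ ZM then c s else 0)) ^ 2)
      ≤ Real.sqrt (∑ s : 𝒮,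
        ((if s ∈ ZP then c s else 0) - (if s ∈ ZM then c s else 0)) ^ 2) := by
  apply Real.sqrt_le_sqrt
  apply Finset.sum_le_sum
  intro s _
  by_cases h0 : s ∈ Z0
  · simp [Finset.mem_inter, h0]
  · have hM : s ∉ ZM := fun h => h0 (hsub h)
    have h0P : s ∉ Z0 ∩ ZP := fun h => h0 (Finset.mem_inter.mp h).1
    rw [if_neg hM, if_neg h0P]
    simpa using sq_nonneg ((if s ∈ ZP then c s else 0) - 0)
end

section
/- Let D be a finite type (the unordered treatment values), L ∈ ℕ, and let r : Fin 2 → Fin L → D be a 2×L matrix with entries in D. Suppose that for all d, d', d'' ∈ D with d' ≠ d and d'' ≠ d, there is no pair of columns l, l' such that (r 0 l, r 0 l', r 1 l, r 1 l') = (d, d', d'', d) or (d', d, d, d''). Then for every d ∈ D, either 1{r 0 l = d} ≤ 1{r 1 l = d} for all l ∈ Fin L, or 1{r 1 l = d} ≤ 1{r 0 l = d} for all l ∈ Fin L. -/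
/-- Absence of the forbidden 2×2 submatrices in a 2×L matrix with entries in a
finite treatment set `D` implies, for each treatment value `d`, pointwise
comparability of the two rows of the indicator matrix `1{r = d}`. -/
theorem no_switch_implies_indicator_comparable
    {D : Type*} [Fintype D] [DecidableEq D] (L : ℕ) (r : Fin 2 → Fin L → D)
    (h : ∀ d d' d'' : D, d' ≠ d → d'' ≠ d →
      ¬ ∃ l l' : Fin L,
        (r 0 l = d ∧ r 0 l' = d' ∧ r 1 l = d'' ∧ r 1 l' = d) ∨
        (r 0 l = d' ∧ r 0 l' = d ∧ r 1 l = d ∧ r 1 l' = d'')) :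
    ∀ d : D,
      (∀ l, (if r 0 l = d then (1 : ℕ) else 0) ≤ (if r 1 l = d then 1 else 0))
      ∨ (∀ l, (if r 1 l = d then (1 : ℕ) else 0) ≤ (if r 0 l = d then 1 else 0)) := by
  intro d
  by_cases h0 : ∀ l, r 0 l = d → r 1 l = d
  · left
    intro l
    by_cases h1 : r 0 l = d
    · simp [h1, h0 l h1]
    · simp [h1]
  · right
    push_neg at h0
    obtain ⟨l, hl0, hl1⟩ := h0
    intro l'
    by_cases h1 : r 1 l' = d
    · by_cases h2 : r 0 l' = d
      · simp [h1, h2]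
      · exact absurd ⟨l, l', Or.inl ⟨hl0, rfl, rfl, h1⟩⟩ (h d (r 0 l') (r 1 l) h2 hl1)
    · simp [h1]
end

section
/- Let (Ω, 𝒜, ℙ) be a probability space with random variables Y₀, Y₁ : Ω → ℝ, D_z, D_{z'} : Ω → {0,1}, and Z : Ω → 𝒵 (𝒵 finite, containing z and z' with ℙ(Z=z) > 0, ℙ(Z=z') > 0). Assume Z is independent of (Y₀, Y₁, D_z, D_{z'}) and D_{z'} ≥ D_z almost surely. Define D = D_z on {Z=z}, D = D_{z'} on {Z=z'}, and Y = Y₁D + Y₀(1−D) on {Z ∈ {z,z'}}. Then for every Borel set B ⊆ ℝ: ℙ(Y ∈ B, D = 1 | Z = z) ≤ ℙ(Y ∈ B, D = 1 | Z = z') and ℙ(Y ∈ B, D = 0 | Z = z) ≥ ℙ(Y ∈ B, D = 0 | Z = z'). -/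
open MeasureTheory ProbabilityTheory

/-- Kitagawa-type testable implications of pairwise instrument validity for a
binary treatment: the joint subdistributions of `(Y, D)` given `Z` are nested
in the direction implied by monotonicity. -/
theorem kitagawa_testable_implications
    {Ω : Type*} [MeasurableSpace Ω] (μ : Measure Ω) [IsProbabilityMeasure μ]
    {𝒵 : Type*} [Fintype 𝒵] [MeasurableSpace 𝒵] [MeasurableSingletonClass 𝒵]
    (Y0 Y1 Dz Dz' : Ω → ℝ) (Z : Ω → 𝒵) (z z' : 𝒵) (hne : z ≠ z')
    (hY0m : Measurable Y0) (hY1m : Measurable Y1)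
    (hDzm : Measurable Dz) (hDz'm : Measurable Dz') (hZm : Measurable Z)
    (hDz01 : ∀ ω, Dz ω = 0 ∨ Dz ω = 1) (hDz'01 : ∀ ω, Dz' ω = 0 ∨ Dz' ω = 1)
    (hz : 0 < μ {ω | Z ω = z}) (hz' : 0 < μ {ω | Z ω = z'})
    (hindep : IndepFun Z (fun ω => (Y0 ω, Y1 ω, Dz ω, Dz' ω)) μ)
    (hmono : ∀ᵐ ω ∂μ, Dz ω ≤ Dz' ω)
    (D Y : Ω → ℝ) (hDm : Measurable D) (hYm : Measurable Y)
    (hDzeq : ∀ ω, Z ω = z → D ω = Dz ω)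
    (hDz'eq : ∀ ω, Z ω = z' → D ω = Dz' ω)
    (hYeq : ∀ ω, (Z ω = z ∨ Z ω = z') → Y ω = Y1 ω * D ω + Y0 ω * (1 - D ω)) :
    ∀ B : Set ℝ, MeasurableSet B →
      (μ {ω | Y ω ∈ B ∧ D ω = 1 ∧ Z ω = z}).toReal / (μ {ω | Z ω = z}).toReal
        ≤ (μ {ω | Y ω ∈ B ∧ D ω = 1 ∧ Z ω = z'}).toReal / (μ {ω | Z ω = z'}).toReal
      ∧ (μ {ω | Y ω ∈ B ∧ D ω = 0 ∧ Z ω = z'}).toReal / (μ {ω | Z ω = z'}).toReal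
        ≤ (μ {ω | Y ω ∈ B ∧ D ω = 0 ∧ Z ω = z}).toReal / (μ {ω | Z ω = z}).toReal := by
  intro B hB
  set W := fun ω => (Y0 ω, Y1 ω, Dz ω, Dz' ω) with hW
  -- measurable rectangles in the codomain of W
  set S1 : Set (ℝ × ℝ × ℝ × ℝ) := {p | p.2.1 ∈ B ∧ p.2.2.1 = 1} with hS1
  set S1' : Set (ℝ × ℝ × ℝ × ℝ) := {p | p.2.1 ∈ B ∧ p.2.2.2 = 1} with hS1'
  set S0 : Set (ℝ × ℝ × ℝ × ℝ) := {p | p.1 ∈ B ∧ p.2.2.1 = 0} with hS0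
  set S0' : Set (ℝ × ℝ × ℝ × ℝ) := {p | p.1 ∈ B ∧ p.2.2.2 = 0} with hS0'
  have hmS1 : MeasurableSet S1 :=
    ((hB.preimage (measurable_fst.comp measurable_snd)).inter
      ((measurableSet_singleton (1:ℝ)).preimage
        (measurable_fst.comp (measurable_snd.comp measurable_snd))))
  have hmS1' : MeasurableSet S1' :=
    ((hB.preimage (measurable_fst.comp measurable_snd)).inter
      ((measurableSet_singleton (1:ℝ)).preimage
        (measurable_snd.comp (measurable_snd.comp measurable_snd))))
  have hmS0 : MeasurableSet S0 :=
    ((hB.preimage measurable_fst).inter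
      ((measurableSet_singleton (0:ℝ)).preimage
        (measurable_fst.comp (measurable_snd.comp measurable_snd))))
  have hmS0' : MeasurableSet S0' :=
    ((hB.preimage measurable_fst).inter
      ((measurableSet_singleton (0:ℝ)).preimage
        (measurable_snd.comp (measurable_snd.comp measurable_snd))))
  -- set identities
  have e1 : {ω | Y ω ∈ B ∧ D ω = 1 ∧ Z ω = z} = Z ⁻¹' {z} ∩ W ⁻¹' S1 := by
    ext ω
    simp only [Set.mem_setOf_eq, Set.mem_inter_iff, Set.mem_preimage, Set.mem_singleton_iff,
      hS1, hW]
    constructor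
    · rintro ⟨hYB, hD1, hZ⟩
      have hDz1 : Dz ω = 1 := (hDzeq ω hZ) ▸ hD1
      have hYv : Y ω = Y1 ω := by rw [hYeq ω (Or.inl hZ), hD1]; ring
      exact ⟨hZ, hYv ▸ hYB, hDz1⟩
    · rintro ⟨hZ, hYB, hDz1⟩
      have hD1 : D ω = 1 := (hDzeq ω hZ).trans hDz1
      have hYv : Y ω = Y1 ω := by rw [hYeq ω (Or.inl hZ), hD1]; ring
      exact ⟨hYv ▸ hYB, hD1, hZ⟩
  have e1' : {ω | Y ω ∈ B ∧ D ω = 1 ∧ Z ω = z'} = Z ⁻¹' {z'} ∩ W ⁻¹' S1' := by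
    ext ω
    simp only [Set.mem_setOf_eq, Set.mem_inter_iff, Set.mem_preimage, Set.mem_singleton_iff,
      hS1', hW]
    constructor
    · rintro ⟨hYB, hD1, hZ⟩
      have hDz1 : Dz' ω = 1 := (hDz'eq ω hZ) ▸ hD1
      have hYv : Y ω = Y1 ω := by rw [hYeq ω (Or.inr hZ), hD1]; ring
      exact ⟨hZ, hYv ▸ hYB, hDz1⟩
    · rintro ⟨hZ, hYB, hDz1⟩
      have hD1 : D ω = 1 := (hDz'eq ω hZ).trans hDz1
      have hYv : Y ω = Y1 ω := by rw [hYeq ω (Or.inr hZ), hD1]; ring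
      exact ⟨hYv ▸ hYB, hD1, hZ⟩
  have e0 : {ω | Y ω ∈ B ∧ D ω = 0 ∧ Z ω = z} = Z ⁻¹' {z} ∩ W ⁻¹' S0 := by
    ext ω
    simp only [Set.mem_setOf_eq, Set.mem_inter_iff, Set.mem_preimage, Set.mem_singleton_iff,
      hS0, hW]
    constructor
    · rintro ⟨hYB, hD0, hZ⟩
      have hDz0 : Dz ω = 0 := (hDzeq ω hZ) ▸ hD0
      have hYv : Y ω = Y0 ω := by rw [hYeq ω (Or.inl hZ), hD0]; ring
      exact ⟨hZ, hYv ▸ hYB, hDz0⟩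
    · rintro ⟨hZ, hYB, hDz0⟩
      have hD0 : D ω = 0 := (hDzeq ω hZ).trans hDz0
      have hYv : Y ω = Y0 ω := by rw [hYeq ω (Or.inl hZ), hD0]; ring
      exact ⟨hYv ▸ hYB, hD0, hZ⟩
  have e0' : {ω | Y ω ∈ B ∧ D ω = 0 ∧ Z ω = z'} = Z ⁻¹' {z'} ∩ W ⁻¹' S0' := by
    ext ω
    simp only [Set.mem_setOf_eq, Set.mem_inter_iff, Set.mem_preimage, Set.mem_singleton_iff,
      hS0', hW]
    constructor
    · rintro ⟨hYB, hD0, hZ⟩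
      have hDz0 : Dz' ω = 0 := (hDz'eq ω hZ) ▸ hD0
      have hYv : Y ω = Y0 ω := by rw [hYeq ω (Or.inr hZ), hD0]; ring
      exact ⟨hZ, hYv ▸ hYB, hDz0⟩
    · rintro ⟨hZ, hYB, hDz0⟩
      have hD0 : D ω = 0 := (hDz'eq ω hZ).trans hDz0
      have hYv : Y ω = Y0 ω := by rw [hYeq ω (Or.inr hZ), hD0]; ring
      exact ⟨hYv ▸ hYB, hD0, hZ⟩
  have hZz : {ω | Z ω = z} = Z ⁻¹' {z} := rfl
  have hZz' : {ω | Z ω = z'} = Z ⁻¹' {z'} := rfl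
  -- independence factorization
  have fact : ∀ (c : 𝒵) (S : Set (ℝ × ℝ × ℝ × ℝ)), MeasurableSet S →
      μ (Z ⁻¹' {c} ∩ W ⁻¹' S) = μ (Z ⁻¹' {c}) * μ (W ⁻¹' S) := fun c S hS =>
    hindep.measure_inter_preimage_eq_mul {c} S (measurableSet_singleton c) hS
  -- monotonicity inclusions
  have incl1 : μ (W ⁻¹' S1) ≤ μ (W ⁻¹' S1') := by
    apply measure_mono_ae
    filter_upwards [hmono] with ω h hmemb
    obtain ⟨hYB, hDz1⟩ := hmemb
    refine ⟨hYB, ?_⟩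
    have hDz1' : Dz ω = 1 := hDz1
    rcases hDz'01 ω with h0 | h1
    · exfalso; rw [hDz1', h0] at h; linarith
    · exact h1
  have incl0 : μ (W ⁻¹' S0') ≤ μ (W ⁻¹' S0) := by
    apply measure_mono_ae
    filter_upwards [hmono] with ω h hmemb
    obtain ⟨hYB, hDz0⟩ := hmemb
    refine ⟨hYB, ?_⟩
    have hDz0' : Dz' ω = 0 := hDz0
    rcases hDz01 ω with h0 | h1
    · exact h0
    · exfalso; rw [h1, hDz0'] at h; linarith
  -- finiteness / positivity facts
  have hza : (μ (Z ⁻¹' {z})).toReal ≠ 0 := by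
    have := hz
    rw [hZz] at this
    exact (ENNReal.toReal_pos this.ne' (measure_ne_top μ _)).ne'
  have hza' : (μ (Z ⁻¹' {z'})).toReal ≠ 0 := by
    have := hz'
    rw [hZz'] at this
    exact (ENNReal.toReal_pos this.ne' (measure_ne_top μ _)).ne'
  have ratio : ∀ (c : 𝒵) (S : Set (ℝ × ℝ × ℝ × ℝ)), MeasurableSet S →
      (μ (Z ⁻¹' {c})).toReal ≠ 0 →
      (μ (Z ⁻¹' {c} ∩ W ⁻¹' S)).toReal / (μ (Z ⁻¹' {c})).toReal = (μ (W ⁻¹' S)).toReal := by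
    intro c S hS hc
    rw [fact c S hS, ENNReal.toReal_mul, mul_comm, mul_div_assoc, div_self hc, mul_one]
  constructor
  · rw [e1, e1', hZz, hZz', ratio z S1 hmS1 hza, ratio z' S1' hmS1' hza']
    exact ENNReal.toReal_mono (measure_ne_top μ _) incl1
  · rw [e0, e0', hZz, hZz', ratio z S0 hmS0 hza, ratio z' S0' hmS0' hza']
    exact ENNReal.toReal_mono (measure_ne_top μ _) incl0
end

section
/- Under the setup of the previous inequality (finite treatment set 𝒟 = {d₁,…,d_J}, potential outcomes (Y_d), potential treatments D_z, D_{z'}, instrument Z ∈ {z,z'} independent of all potential variables with positive mass at both points, D = D_z1{Z=z} + D_{z'}1{Z=z'}, Y = Σ_d Y_d 1{D=d}), for any finite partitions P¹, …, P^J of ℝ into Borel sets, it holds that Σ_{A₁∈P¹} ⋯ Σ_{A_J∈P^J} min_{w∈{z,z'}} Σ_{j=1}^{J} ℙ(Y ∈ A_j, D = d_j | Z = w) ≥ 1. -/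
open MeasureTheory ProbabilityTheory

/-- Second Kédagni–Mourifié-type testable inequality: for any finite Borel
partitions `A j` of ℝ (one per treatment value `j : Fin J`), the sum over all
cells of the product partition of the minimum (over the two instrument values)
of the total conditional subdistribution mass is at least one. -/
theorem km_partition_lower_bound
    {Ω : Type*} [MeasurableSpace Ω] (μ : Measure Ω) [IsProbabilityMeasure μ]
    (J : ℕ) (hJ : 1 ≤ J)
    (Yp : Fin J → Ω → ℝ) (hYm : ∀ j, Measurable (Yp j))
    (Dz Dz' : Ω → Fin J) (hDzm : Measurable Dz) (hDz'm : Measurable Dz')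
    (Z : Ω → Bool) (hZm : Measurable Z)
    (hz : 0 < μ {ω | Z ω = false}) (hz' : 0 < μ {ω | Z ω = true})
    (hindep : IndepFun Z (fun ω => ((fun j => Yp j ω), Dz ω, Dz' ω)) μ)
    (D : Ω → Fin J) (Y : Ω → ℝ)
    (hD : ∀ ω, D ω = if Z ω = true then Dz' ω else Dz ω)
    (hY : ∀ ω, Y ω = ∑ j : Fin J, Yp j ω * (if D ω = j then 1 else 0))
    (N : Fin J → ℕ) (A : (j : Fin J) → Fin (N j) → Set ℝ)
    (hAm : ∀ j i, MeasurableSet (A j i))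
    (hAcover : ∀ j, (⋃ i, A j i) = Set.univ)
    (hAdisj : ∀ j, ∀ i i' : Fin (N j), i ≠ i' → Disjoint (A j i) (A j i')) :
    1 ≤ ∑ f : (j : Fin J) → Fin (N j),
        min
          (∑ j : Fin J, (μ {ω | Y ω ∈ A j (f j) ∧ D ω = j ∧ Z ω = false}).toReal
            / (μ {ω | Z ω = false}).toReal)
          (∑ j : Fin J, (μ {ω | Y ω ∈ A j (f j) ∧ D ω = j ∧ Z ω = true}).toReal
            / (μ {ω | Z ω = true}).toReal) := by

  classical
  have hYD : ∀ ω, Y ω = Yp (D ω) ω := by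
    intro ω
    rw [hY, Finset.sum_eq_single (D ω)]
    · simp
    · intro b _ hb; simp [Ne.symm hb]
    · simp
  set E : ((j : Fin J) → Fin (N j)) → Set Ω :=
    fun f => {ω | ∀ j, Yp j ω ∈ A j (f j)} with hE
  have hEeq : ∀ f, E f = ⋂ j, (Yp j) ⁻¹' (A j (f j)) := by
    intro f; ext ω; simp [hE, Set.mem_iInter]
  have hEmeas : ∀ f, MeasurableSet (E f) := by
    intro f
    rw [hEeq]
    exact MeasurableSet.iInter fun j => (hYm j) (hAm j (f j))
  -- independence
  have hindep' : ∀ f (w : Bool),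
      μ ({ω | Z ω = w} ∩ E f) = μ {ω | Z ω = w} * μ (E f) := by
    intro f w
    have hS : MeasurableSet
        {p : (Fin J → ℝ) × Fin J × Fin J | ∀ j, p.1 j ∈ A j (f j)} := by
      have : {p : (Fin J → ℝ) × Fin J × Fin J | ∀ j, p.1 j ∈ A j (f j)}
          = ⋂ j, (fun p : (Fin J → ℝ) × Fin J × Fin J => p.1 j) ⁻¹' A j (f j) := by
        ext p; simp [Set.mem_iInter]
      rw [this]
      exact MeasurableSet.iInter fun j =>
        ((measurable_pi_apply j).comp measurable_fst) (hAm j (f j))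
    have h := hindep.measure_inter_preimage_eq_mul {w}
      {p : (Fin J → ℝ) × Fin J × Fin J | ∀ j, p.1 j ∈ A j (f j)}
      (measurableSet_singleton w) hS
    have h1 : Z ⁻¹' {w} = {ω | Z ω = w} := by ext ω; simp
    have h2 : (fun ω => ((fun j => Yp j ω), Dz ω, Dz' ω)) ⁻¹'
        {p : (Fin J → ℝ) × Fin J × Fin J | ∀ j, p.1 j ∈ A j (f j)} = E f := by
      ext ω; simp [hE]
    rw [h1, h2] at h
    exact h
  -- per-branch bound
  have key : ∀ f (w : Bool),
      (μ (E f)).toReal ≤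
        (∑ j : Fin J, (μ {ω | Y ω ∈ A j (f j) ∧ D ω = j ∧ Z ω = w}).toReal)
          / (μ {ω | Z ω = w}).toReal := by
    intro f w
    have hw : 0 < μ {ω | Z ω = w} := by cases w <;> assumption
    have hwfin : μ {ω | Z ω = w} ≠ ⊤ := measure_ne_top μ _
    have hsub : {ω | Z ω = w} ∩ E f ⊆
        ⋃ j : Fin J, {ω | Y ω ∈ A j (f j) ∧ D ω = j ∧ Z ω = w} := by
      intro ω hω
      refine Set.mem_iUnion.2 ⟨D ω, ?_, rfl, hω.1⟩
      rw [hYD ω]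
      exact hω.2 (D ω)
    have hle : μ {ω | Z ω = w} * μ (E f)
        ≤ ∑ j : Fin J, μ {ω | Y ω ∈ A j (f j) ∧ D ω = j ∧ Z ω = w} := by
      calc μ {ω | Z ω = w} * μ (E f) = μ ({ω | Z ω = w} ∩ E f) :=
            (hindep' f w).symm
        _ ≤ μ (⋃ j : Fin J, {ω | Y ω ∈ A j (f j) ∧ D ω = j ∧ Z ω = w}) :=
            measure_mono hsub
        _ ≤ ∑ j : Fin J, μ {ω | Y ω ∈ A j (f j) ∧ D ω = j ∧ Z ω = w} :=
            measure_iUnion_fintype_le _ _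
    have hlt : (0:ℝ) < (μ {ω | Z ω = w}).toReal :=
      ENNReal.toReal_pos hw.ne' hwfin
    rw [le_div_iff₀ hlt]
    have := ENNReal.toReal_mono
      (ENNReal.sum_ne_top.2 fun j _ => measure_ne_top μ _) hle
    rw [ENNReal.toReal_mul] at this
    rw [ENNReal.toReal_sum (fun j _ => measure_ne_top μ _)] at this
    linarith [this]
  -- sum of μ (E f) equals 1
  have hdisj : Pairwise (Function.onFun Disjoint E) := by
    intro f g hfg
    obtain ⟨j, hj⟩ := Function.ne_iff.1 hfg
    refine Set.disjoint_left.2 fun ω hf hg => ?_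
    exact Set.disjoint_left.1 (hAdisj j (f j) (g j) hj) (hf j) (hg j)
  have hcover : (⋃ f, E f) = Set.univ := by
    ext ω
    simp only [Set.mem_iUnion, Set.mem_univ, iff_true]
    have hch : ∀ j, ∃ i, Yp j ω ∈ A j i := by
      intro j
      have := hAcover j
      have : Yp j ω ∈ ⋃ i, A j i := by rw [this]; trivial
      exact Set.mem_iUnion.1 this
    exact ⟨fun j => (hch j).choose, fun j => (hch j).choose_spec⟩
  have hsum1 : ∑ f : (j : Fin J) → Fin (N j), (μ (E f)).toReal = 1 := by
    have : ∑ f : (j : Fin J) → Fin (N j), μ (E f) = 1 := by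
      rw [← measure_univ (μ := μ), ← hcover, measure_iUnion hdisj hEmeas, tsum_fintype]
    rw [← ENNReal.toReal_sum (fun f _ => measure_ne_top μ _), this, ENNReal.toReal_one]
  calc (1:ℝ) = ∑ f : (j : Fin J) → Fin (N j), (μ (E f)).toReal := hsum1.symm
    _ ≤ _ := Finset.sum_le_sum fun f _ => by
        simp only [← Finset.sum_div]
        exact le_min (key f false) (key f true)
end

section
/- Under the same setup, for any finite partition P of ℝ into Borel sets and any d ∈ 𝒟: Σ_{A ∈ P} max_{w ∈ {z, z'}} ℙ(Y ∈ A, D = d | Z = w) ≤ 1. -/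
open MeasureTheory ProbabilityTheory

/-- First Kédagni–Mourifié-type testable inequality (discrete-partition form):
for any finite Borel partition of ℝ and any treatment value `d`, the sum over
cells of the maximum (over the two instrument values) of the conditional
subdistribution mass is at most one. -/
theorem km_partition_upper_bound
    {Ω : Type*} [MeasurableSpace Ω] (μ : Measure Ω) [IsProbabilityMeasure μ]
    {𝒟 : Type*} [Fintype 𝒟] [DecidableEq 𝒟] [MeasurableSpace 𝒟]
    [MeasurableSingletonClass 𝒟]
    (Yp : 𝒟 → Ω → ℝ) (hYm : ∀ d, Measurable (Yp d))
    (Dz Dz' : Ω → 𝒟) (hDzm : Measurable Dz) (hDz'm : Measurable Dz')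
    (Z : Ω → Bool) (hZm : Measurable Z)
    (hz : 0 < μ {ω | Z ω = false}) (hz' : 0 < μ {ω | Z ω = true})
    (hindep : IndepFun Z (fun ω => ((fun d => Yp d ω), Dz ω, Dz' ω)) μ)
    (D : Ω → 𝒟) (Y : Ω → ℝ)
    (hD : ∀ ω, D ω = if Z ω = true then Dz' ω else Dz ω)
    (hY : ∀ ω, Y ω = ∑ d : 𝒟, Yp d ω * (if D ω = d then 1 else 0))
    (N : ℕ) (A : Fin N → Set ℝ)
    (hAm : ∀ i, MeasurableSet (A i))
    (hAcover : (⋃ i, A i) = Set.univ)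
    (hAdisj : ∀ i i' : Fin N, i ≠ i' → Disjoint (A i) (A i'))
    (d : 𝒟) :
    ∑ i : Fin N,
        max
          ((μ {ω | Y ω ∈ A i ∧ D ω = d ∧ Z ω = false}).toReal
            / (μ {ω | Z ω = false}).toReal)
          ((μ {ω | Y ω ∈ A i ∧ D ω = d ∧ Z ω = true}).toReal
            / (μ {ω | Z ω = true}).toReal)
      ≤ 1 := by
  -- Y ω = Yp (D ω) ω
  have hY' : ∀ ω, Y ω = Yp (D ω) ω := by
    intro ω
    rw [hY ω]
    rw [Finset.sum_eq_single (D ω)]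
    · simp
    · intro b _ hb; simp [Ne.symm hb]
    · simp
  -- key bound per cell and per instrument value
  have key : ∀ (i : Fin N) (w : Bool),
      (μ {ω | Y ω ∈ A i ∧ D ω = d ∧ Z ω = w}).toReal / (μ {ω | Z ω = w}).toReal
        ≤ (μ {ω | Yp d ω ∈ A i}).toReal := by
    intro i w
    have hw : 0 < μ {ω | Z ω = w} := by cases w <;> assumption
    set G : Ω → 𝒟 := if w = true then Dz' else Dz with hG
    have hset : {ω | Y ω ∈ A i ∧ D ω = d ∧ Z ω = w}
        = Z ⁻¹' {w} ∩ (fun ω => ((fun d => Yp d ω), Dz ω, Dz' ω)) ⁻¹'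
            {p : (𝒟 → ℝ) × 𝒟 × 𝒟 | p.1 d ∈ A i ∧ (if w = true then p.2.2 else p.2.1) = d} := by
      ext ω
      simp only [Set.mem_setOf_eq, Set.mem_inter_iff, Set.mem_preimage, Set.mem_singleton_iff]
      constructor
      · rintro ⟨h1, h2, h3⟩
        refine ⟨h3, ?_, ?_⟩
        · rw [hY' ω, h2] at h1; exact h1
        · rw [← h2, hD ω, h3]
      · rintro ⟨h3, h1, h2⟩
        have hDd : D ω = d := by rw [hD ω, h3]; cases w <;> simpa using h2
        exact ⟨by rw [hY' ω, hDd]; exact h1, hDd, h3⟩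
    have hmeas : MeasurableSet {p : (𝒟 → ℝ) × 𝒟 × 𝒟 |
        p.1 d ∈ A i ∧ (if w = true then p.2.2 else p.2.1) = d} := by
      apply MeasurableSet.inter
      · exact (measurable_pi_apply d).comp measurable_fst (hAm i)
      · cases w
        · exact (measurable_fst.comp measurable_snd) (MeasurableSet.singleton d)
        · exact (measurable_snd.comp measurable_snd) (MeasurableSet.singleton d)
    have hindep' := hindep.measure_inter_preimage_eq_mul {w} _ (MeasurableSet.singleton w) hmeas
    have hZset : Z ⁻¹' {w} = {ω | Z ω = w} := by ext ω; simp
    have hmul : μ {ω | Y ω ∈ A i ∧ D ω = d ∧ Z ω = w}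
        = μ {ω | Z ω = w} * μ {ω | Yp d ω ∈ A i ∧ (if w = true then Dz' ω else Dz ω) = d} := by
      rw [hset, ← hZset, hindep']
      congr 1

    have hfin : μ {ω | Z ω = w} ≠ ⊤ := measure_ne_top μ _
    have hfin2 : μ {ω | Yp d ω ∈ A i ∧ (if w = true then Dz' ω else Dz ω) = d} ≠ ⊤ :=
      measure_ne_top μ _
    have hZne : (μ {ω | Z ω = w}).toReal ≠ 0 := by
      have : 0 < (μ {ω | Z ω = w}).toReal :=
        ENNReal.toReal_pos (ne_of_gt hw) hfin
      linarith
    rw [hmul, ENNReal.toReal_mul, mul_comm, mul_div_assoc, div_self hZne, mul_one]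
    refine ENNReal.toReal_mono (measure_ne_top μ _) (measure_mono ?_)
    intro ω hω; exact hω.1
  -- sum of cell masses equals 1
  have hsum : ∑ i : Fin N, (μ {ω | Yp d ω ∈ A i}).toReal = 1 := by
    have hdisj' : Pairwise (Function.onFun Disjoint (fun i => Yp d ⁻¹' A i)) := by
      intro i j hij
      exact (hAdisj i j hij).preimage _
    have hmeas : ∀ i, MeasurableSet (Yp d ⁻¹' A i) := fun i => (hYm d) (hAm i)
    have hU : μ (⋃ i, Yp d ⁻¹' A i) = ∑' i, μ (Yp d ⁻¹' A i) :=
      measure_iUnion hdisj' hmeas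
    have hUuniv : (⋃ i, Yp d ⁻¹' A i) = Set.univ := by
      rw [← Set.preimage_iUnion, hAcover, Set.preimage_univ]
    rw [hUuniv, measure_univ] at hU
    have : ∑ i : Fin N, μ (Yp d ⁻¹' A i) = 1 := by
      rw [← tsum_fintype (L := SummationFilter.unconditional _)]; exact hU.symm
    have h2 : (∑ i : Fin N, μ (Yp d ⁻¹' A i)).toReal = 1 := by rw [this]; simp
    rw [ENNReal.toReal_sum (fun i _ => measure_ne_top μ _)] at h2
    simpa [Set.preimage] using h2
  calc ∑ i : Fin N, max
          ((μ {ω | Y ω ∈ A i ∧ D ω = d ∧ Z ω = false}).toReal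
            / (μ {ω | Z ω = false}).toReal)
          ((μ {ω | Y ω ∈ A i ∧ D ω = d ∧ Z ω = true}).toReal
            / (μ {ω | Z ω = true}).toReal)
      ≤ ∑ i : Fin N, (μ {ω | Yp d ω ∈ A i}).toReal := by
        apply Finset.sum_le_sum
        intro i _
        exact max_le (key i false) (key i true)
    _ = 1 := hsum
end

section
/- Let G be a finite set, s : G → ℝ a function, and for each n let ŝ_n : G → ℝ be random variables such that for every g ∈ G, the sequence √n·(ŝ_n(g) − s(g)) is bounded in probability (tight). Let (τ_n) be a sequence of positive reals with τ_n → ∞ and τ_n/√n → 0. Define G₀ = {g ∈ G : s(g) = 0} and Ĝ_n = {g ∈ G : √n·|ŝ_n(g)| ≤ τ_n}. Then ℙ(Ĝ_n = G₀) → 1 as n → ∞. -/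
open MeasureTheory Filter

/-- Consistency of the thresholding set estimator: if for each `g` the
studentized statistics `√n (ŝ_n(g) − s(g))` are bounded in probability, and
`τ_n → ∞` with `τ_n/√n → 0`, then the estimated set
`Ĝ_n = {g : √n |ŝ_n(g)| ≤ τ_n}` equals `G₀ = {g : s(g) = 0}` with probability
tending to one. -/
theorem estimated_validity_set_consistency
    {Ω : Type*} [MeasurableSpace Ω] (μ : Measure Ω) [IsProbabilityMeasure μ]
    {G : Type*} [Fintype G]
    (s : G → ℝ) (shat : ℕ → G → Ω → ℝ)
    (htight : ∀ g : G, ∀ ε : ℝ, 0 < ε → ∃ M : ℝ,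
      ∀ n : ℕ, (μ {ω | M < Real.sqrt n * |shat n g ω - s g|}).toReal ≤ ε)
    (τ : ℕ → ℝ) (hτpos : ∀ n, 0 < τ n)
    (hτ : Tendsto τ atTop atTop)
    (hτn : Tendsto (fun n => τ n / Real.sqrt n) atTop (nhds 0)) :
    Tendsto
      (fun n : ℕ =>
        μ {ω | {g : G | Real.sqrt n * |shat n g ω| ≤ τ n} = {g : G | s g = 0}})
      atTop (nhds (1 : ENNReal)) := by
  classical
  set Bad : ℕ → G → Set Ω := fun n g =>
    if s g = 0 then {ω | ¬ Real.sqrt n * |shat n g ω| ≤ τ n}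
    else {ω | Real.sqrt n * |shat n g ω| ≤ τ n} with hBad
  have hbadg : ∀ g, Tendsto (fun n => μ (Bad n g)) atTop (nhds 0) := by
    intro g
    rw [ENNReal.tendsto_nhds_zero]
    intro ε hε
    rcases eq_or_ne ε ⊤ with rfl | hεtop
    · exact Eventually.of_forall fun n => le_top
    have hε' : 0 < ε.toReal := ENNReal.toReal_pos hε.ne' hεtop
    obtain ⟨M, hM⟩ := htight g ε.toReal hε'
    have hconv : ∀ n : ℕ, μ {ω | M < Real.sqrt n * |shat n g ω - s g|} ≤ ε := by
      intro n
      have h2 : μ {ω | M < Real.sqrt n * |shat n g ω - s g|} ≠ ⊤ :=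
        (measure_lt_top μ _).ne
      calc μ {ω | M < Real.sqrt n * |shat n g ω - s g|}
          = ENNReal.ofReal (μ {ω | M < Real.sqrt n * |shat n g ω - s g|}).toReal :=
            (ENNReal.ofReal_toReal h2).symm
        _ ≤ ENNReal.ofReal ε.toReal := ENNReal.ofReal_le_ofReal (hM n)
        _ = ε := ENNReal.ofReal_toReal hεtop
    by_cases hg : s g = 0
    · filter_upwards [hτ.eventually_ge_atTop M] with n hn
      refine le_trans (measure_mono ?_) (hconv n)
      intro ω hω
      simp only [hBad, if_pos hg, Set.mem_setOf_eq, not_le] at hω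
      simp only [Set.mem_setOf_eq, hg, sub_zero]
      exact lt_of_le_of_lt hn hω
    · have hs : 0 < |s g| := abs_pos.mpr hg
      have h1 : ∀ᶠ n in atTop, τ n / Real.sqrt n < |s g| / 2 := by
        have := hτn.eventually (eventually_lt_nhds (show (0:ℝ) < |s g| / 2 by positivity))
        exact this
      have hsq : Tendsto (fun n : ℕ => Real.sqrt n) atTop atTop := by
        apply tendsto_atTop_atTop.mpr
        intro b
        refine ⟨⌈b⌉₊ ^ 2, fun n hn => ?_⟩
        calc b ≤ (⌈b⌉₊ : ℝ) := Nat.le_ceil b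
          _ = Real.sqrt ((⌈b⌉₊ : ℝ) ^ 2) := by rw [Real.sqrt_sq (by positivity)]
          _ ≤ Real.sqrt n := Real.sqrt_le_sqrt (by exact_mod_cast hn)
      have h2 : Tendsto (fun n : ℕ => Real.sqrt n * (|s g| / 2)) atTop atTop :=
        Tendsto.atTop_mul_const (by positivity) hsq
      have h3 : ∀ᶠ n : ℕ in atTop, M < Real.sqrt n * (|s g| / 2) := h2.eventually_gt_atTop M
      filter_upwards [h1, h3, eventually_ge_atTop 1] with n hn1 hn3 hn4
      refine le_trans (measure_mono ?_) (hconv n)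
      intro ω hω
      simp only [hBad, if_neg hg, Set.mem_setOf_eq] at hω
      simp only [Set.mem_setOf_eq]
      have hsqrt : 0 < Real.sqrt n := Real.sqrt_pos.mpr (by exact_mod_cast hn4)
      have hτlt : τ n < Real.sqrt n * (|s g| / 2) := by
        have := (div_lt_iff₀ hsqrt).mp hn1
        linarith
      have habs : Real.sqrt n * |s g| - Real.sqrt n * |shat n g ω| ≤
          Real.sqrt n * |shat n g ω - s g| := by
        have h5 : |s g| - |shat n g ω| ≤ |shat n g ω - s g| := by
          have := abs_sub_abs_le_abs_sub (s g) (shat n g ω)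
          rw [abs_sub_comm] at this; linarith
        nlinarith [hsqrt.le]
      linarith [habs, hω, hτlt, hn3]
  have hsum : Tendsto (fun n => ∑ g : G, μ (Bad n g)) atTop (nhds 0) := by
    have := tendsto_finset_sum (Finset.univ : Finset G) (fun g _ => hbadg g)
    simpa using this
  set Good : ℕ → Set Ω := fun n =>
    {ω | {g : G | Real.sqrt n * |shat n g ω| ≤ τ n} = {g : G | s g = 0}} with hGood
  have hsub : ∀ n, (Good n)ᶜ ⊆ ⋃ g : G, Bad n g := by
    intro n ω hω
    by_contra hc
    simp only [Set.mem_iUnion, not_exists] at hc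
    apply hω
    show {g : G | Real.sqrt n * |shat n g ω| ≤ τ n} = {g : G | s g = 0}
    ext g
    have hcg := hc g
    simp only [Set.mem_setOf_eq]
    by_cases hg : s g = 0
    · simp only [hBad, if_pos hg, Set.mem_setOf_eq, not_not] at hcg
      tauto
    · simp only [hBad, if_neg hg, Set.mem_setOf_eq] at hcg
      tauto
  have hcompl : ∀ n, μ ((Good n)ᶜ) ≤ ∑ g : G, μ (Bad n g) := by
    intro n
    refine le_trans (measure_mono (hsub n)) ?_
    exact measure_iUnion_fintype_le μ (Bad n)
  have hlb : ∀ n, 1 - ∑ g : G, μ (Bad n g) ≤ μ (Good n) := by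
    intro n
    rw [tsub_le_iff_right]
    calc (1 : ENNReal) = μ Set.univ := (measure_univ (μ := μ)).symm
      _ = μ (Good n ∪ (Good n)ᶜ) := by rw [Set.union_compl_self]
      _ ≤ μ (Good n) + μ ((Good n)ᶜ) := measure_union_le _ _
      _ ≤ μ (Good n) + ∑ g : G, μ (Bad n g) := by gcongr; exact hcompl n
  have hub : ∀ n, μ (Good n) ≤ 1 := fun n => prob_le_one
  have hlbt : Tendsto (fun n => 1 - ∑ g : G, μ (Bad n g)) atTop (nhds (1 : ENNReal)) := by
    have := ENNReal.Tendsto.sub (tendsto_const_nhds (x := (1 : ENNReal))) hsum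
      (Or.inr (by simp))
    simpa using this
  exact tendsto_of_tendsto_of_tendsto_of_le_of_le hlbt tendsto_const_nhds hlb hub
end
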